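/- Let V be a finite-dimensional normed ℚ_p-vector space and let α_1, …, α_n be a basis of V with |α_1| = |α_2| = ⋯ = |α_n| = λ_1. Then α_1, …, α_n is an orthogonal basis of V if and only if |∑ a_i α_i| = λ_1 for every nonzero tuple (a_1, …, a_n) ∈ {0, 1, …, p−1}^n. -/

import Mathlib

theorem stmt4 {p : ℕ} [Fact p.Prime] {V : Type*} [AddCommGroup V] [Module ℚ_[p] V]
    (N : V → ℝ)
    (hnonneg : ∀ v, 0 ≤ N v)
    (hzero : ∀ v, N v = 0 ↔ v = 0)
    (hsmul : ∀ (x : ℚ_[p]) (v : V), N (x • v) = ‖x‖ * N v)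
    (hna : ∀ v w, N (v + w) ≤ max (N v) (N w))
    {n : ℕ} (hn : 0 < n) (α : Module.Basis (Fin n) ℚ_[p] V)
    (lam : ℝ) (hlam : ∀ i, N (α i) = lam) :
    (∀ a : Fin n → ℚ_[p],
        N (∑ i, a i • α i) =
          Finset.univ.sup' ⟨⟨0, hn⟩, Finset.mem_univ _⟩ (fun i => N (a i • α i))) ↔
    (∀ a : Fin n → ℕ, (∀ i, a i < p) → a ≠ 0 →
        N (∑ i, (a i : ℚ_[p]) • α i) = lam) := by
  have hp1 : 1 < (p : ℝ) := by exact_mod_cast (Fact.out : p.Prime).one_lt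
  have hN0 : N (0 : V) = 0 := (hzero 0).2 rfl
  have hlam_pos : 0 < lam := by
    rcases lt_or_eq_of_le (hnonneg (α ⟨0, hn⟩)) with h | h
    · rwa [hlam] at h
    · exact absurd ((hzero _).1 h.symm) (α.ne_zero _)
  have hneg : ∀ v : V, N (-v) = N v := by
    intro v
    have h1 : (-v) = ((-1 : ℚ_[p]) • v) := by simp
    rw [h1, hsmul]; simp
  have key : ∀ x y : V, N y < N x → N (x + y) = N x := by
    intro x y h
    apply le_antisymm
    · exact (hna x y).trans (by rw [max_eq_left h.le])
    · by_contra hc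
      push_neg at hc
      have h2 : N x ≤ max (N (x + y)) (N y) := by
        have h3 := hna (x + y) (-y)
        simpa [hneg] using h3
      rcases max_cases (N (x + y)) (N y) with ⟨he, _⟩ | ⟨he, _⟩ <;> rw [he] at h2 <;> linarith
  have sumBound : ∀ (s : Finset (Fin n)) (f : Fin n → V) (C : ℝ), 0 ≤ C →
      (∀ i ∈ s, N (f i) ≤ C) → N (∑ i ∈ s, f i) ≤ C := by
    intro s
    induction s using Finset.cons_induction with
    | empty => intro f C hC _; simpa [hN0] using hC
    | cons i s his ih =>
      intro f C hC h
      rw [Finset.sum_cons]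
      refine (hna _ _).trans (max_le (h i (Finset.mem_cons_self _ _)) (ih f C hC ?_))
      intro k hk; exact h k (Finset.mem_cons_of_mem hk)
  constructor
  · -- forward
    intro H a ha hane
    rw [H]
    obtain ⟨j, hj⟩ : ∃ j, a j ≠ 0 := by
      by_contra hc; push_neg at hc; exact hane (funext fun i => hc i)
    apply le_antisymm
    · apply Finset.sup'_le
      intro i _
      rw [hsmul, hlam]
      have h1 : ‖((a i : ℤ) : ℚ_[p])‖ ≤ 1 := Padic.norm_int_le_one _
      have h1' : ‖((a i : ℕ) : ℚ_[p])‖ ≤ 1 := by exact_mod_cast h1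
      nlinarith
    · refine Finset.le_sup'_of_le _ (Finset.mem_univ j) ?_
      rw [hsmul, hlam]
      have hnj : ‖((a j : ℕ) : ℚ_[p])‖ = 1 := by
        have hle : ‖((a j : ℤ) : ℚ_[p])‖ ≤ 1 := Padic.norm_int_le_one _
        have hlt : ¬ ‖((a j : ℤ) : ℚ_[p])‖ < 1 := by
          rw [Padic.norm_intCast_lt_one_iff]
          intro hdvd
          have hd : p ∣ a j := by exact_mod_cast hdvd
          have := Nat.le_of_dvd (Nat.pos_of_ne_zero hj) hd
          have := ha j
          omega
        have h2 := le_antisymm hle (not_lt.mp hlt)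
        exact_mod_cast h2
      rw [hnj, one_mul]
  · -- backward
    intro H a
    by_cases ha0 : a = 0
    · subst ha0
      simp only [Pi.zero_apply, zero_smul, Finset.sum_const_zero, hN0]
      symm
      apply le_antisymm
      · apply Finset.sup'_le; intro i _; simp [hN0]
      · refine Finset.le_sup'_of_le _ (Finset.mem_univ ⟨0, hn⟩) ?_; simp [hN0]
    · obtain ⟨j, -, hj⟩ := Finset.exists_mem_eq_sup' (⟨⟨0, hn⟩, Finset.mem_univ _⟩ :
        (Finset.univ : Finset (Fin n)).Nonempty) (fun i => ‖a i‖)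
      have hjmax : ∀ i, ‖a i‖ ≤ ‖a j‖ := fun i => by
        rw [← hj]; exact Finset.le_sup' (fun i => ‖a i‖) (Finset.mem_univ i)
      have hcne : a j ≠ 0 := by
        obtain ⟨k, hk⟩ : ∃ k, a k ≠ 0 := by
          by_contra hc; push_neg at hc; exact ha0 (funext fun i => hc i)
        intro h
        have h2 := hjmax k
        rw [h, norm_zero] at h2
        exact hk (norm_le_zero_iff.mp h2)
      set c := a j with hc
      have hcpos : 0 < ‖c‖ := norm_pos_iff.mpr hcne
      have hb : ∀ i, ‖c⁻¹ * a i‖ ≤ 1 := by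
        intro i
        have h1 : ‖c⁻¹ * a i‖ = ‖a i‖ / ‖c‖ := by
          rw [norm_mul, norm_inv]; ring
        rw [h1, div_le_one hcpos]
        exact hjmax i
      have hdig : ∀ i, ∃ (d : ℕ) (e : ℚ_[p]), d < p ∧ ‖e‖ ≤ 1 ∧
          c⁻¹ * a i = (d : ℚ_[p]) + (p : ℚ_[p]) * e := by
        intro i
        set B : ℤ_[p] := ⟨c⁻¹ * a i, hb i⟩ with hB
        have hd := B.appr_lt 1
        have hs := B.appr_spec 1
        rw [Ideal.mem_span_singleton] at hs
        obtain ⟨E, hE⟩ := hs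
        refine ⟨B.appr 1, (E : ℚ_[p]), by simpa using hd, E.property, ?_⟩
        have h2 : ((B - (B.appr 1 : ℤ_[p]) : ℤ_[p]) : ℚ_[p]) = (((p : ℤ_[p]) ^ 1 * E : ℤ_[p]) : ℚ_[p]) := by
          rw [hE]
        push_cast at h2
        rw [pow_one] at h2
        linear_combination h2
      choose d e hd he heq using hdig
      have hdj : d j ≠ 0 := by
        intro h0
        have h1 : c⁻¹ * a j = (p : ℚ_[p]) * e j := by
          have := heq j; rw [h0] at this; simpa using this
        have h2 : ‖c⁻¹ * a j‖ = 1 := by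
          rw [← hc, inv_mul_cancel₀ hcne, norm_one]
        rw [h1, norm_mul, Padic.norm_p] at h2
        have h4 : (p : ℝ)⁻¹ < 1 := by
          rw [inv_lt_one_iff₀]; right; exact hp1
        nlinarith [he j, norm_nonneg (e j), inv_pos.mpr (by linarith : (0:ℝ) < (p:ℝ))]
      have hdne : d ≠ 0 := fun h => hdj (by rw [h]; rfl)
      have hx : N (∑ i, (d i : ℚ_[p]) • α i) = lam := H d hd hdne
      have hMain : N (∑ i, (c⁻¹ * a i) • α i) = lam := by
        have hsplit : ∑ i, (c⁻¹ * a i) • α i =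
            (∑ i, ((d i : ℚ_[p])) • α i) + (∑ i, ((p : ℚ_[p]) * e i) • α i) := by
          rw [← Finset.sum_add_distrib]
          refine Finset.sum_congr rfl fun i _ => ?_
          rw [heq i, add_smul]
        have hy : N (∑ i, ((p : ℚ_[p]) * e i) • α i) ≤ (p : ℝ)⁻¹ * lam := by
          apply sumBound _ _ _ (by positivity)
          intro i _
          rw [hsmul, hlam, norm_mul, Padic.norm_p]
          nlinarith [mul_nonneg (inv_nonneg.mpr (by linarith : (0:ℝ) ≤ (p:ℝ)))
            (mul_nonneg (sub_nonneg.mpr (he i)) hlam_pos.le)]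
        have hylt : N (∑ i, ((p : ℚ_[p]) * e i) • α i) < N (∑ i, (d i : ℚ_[p]) • α i) := by
          rw [hx]
          refine hy.trans_lt ?_
          have h4 : (p : ℝ)⁻¹ < 1 := by
            rw [inv_lt_one_iff₀]; right; exact hp1
          nlinarith
        rw [hsplit, key _ _ hylt, hx]
      have hrw : ∑ i, a i • α i = c • ∑ i, (c⁻¹ * a i) • α i := by
        rw [Finset.smul_sum]
        refine Finset.sum_congr rfl fun i _ => ?_
        rw [smul_smul, ← mul_assoc, mul_inv_cancel₀ hcne, one_mul]
      rw [hrw, hsmul, hMain]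
      symm
      apply le_antisymm
      · apply Finset.sup'_le
        intro i _
        rw [hsmul, hlam]
        exact mul_le_mul_of_nonneg_right (hjmax i) hlam_pos.le
      · refine Finset.le_sup'_of_le _ (Finset.mem_univ j) ?_
        rw [hsmul, hlam]
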